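/- For θ ∈ [0, π/2), with τ₀ = cos(θ/2)e₀ + sin(θ/2)e₁, τ₁ = sin(θ/2)e₀ + cos(θ/2)e₁, Σ'₁ = (1/√2)(e₀ ⊗ τ₀ + e₁ ⊗ τ₁), and Σ'₂ = (1/√2)(e₀ ⊗ τ₁ + e₁ ⊗ τ₀), consider the two-qubit state κ'(p) = p|Σ'₁⟩⟨Σ'₁| + (1−p)|Σ'₂⟩⟨Σ'₂| for p ∈ [0,1]. For every p ≠ 1/2 and every θ ∈ [0, π/2), the state κ'(p) is NOT separable (it is entangled). That is, the masked states of classical mixtures of two single-qubit pure non-commuting states are entangled for all unequal mixing weights. -/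

import Mathlib

open Matrix Kronecker Polynomial ComplexOrder

noncomputable section

/-- Partial trace over the first subsystem of a two-qubit (4×4) matrix. -/
def ptr1 (M : Matrix (Fin 2 × Fin 2) (Fin 2 × Fin 2) ℂ) : Matrix (Fin 2) (Fin 2) ℂ :=
  Matrix.of fun j l => ∑ i, M (i, j) (i, l)

/-- Partial trace over the second subsystem of a two-qubit (4×4) matrix. -/
def ptr2 (M : Matrix (Fin 2 × Fin 2) (Fin 2 × Fin 2) ℂ) : Matrix (Fin 2) (Fin 2) ℂ :=
  Matrix.of fun i k => ∑ j, M (i, j) (k, j)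

/-- Rank-one projection |v⟩⟨v| of a qubit vector. -/
def proj2 (v : Fin 2 → ℂ) : Matrix (Fin 2) (Fin 2) ℂ :=
  Matrix.of fun i j => v i * star (v j)

/-- Rank-one projection |v⟩⟨v| of a two-qubit vector. -/
def proj4 (v : Fin 2 × Fin 2 → ℂ) : Matrix (Fin 2 × Fin 2) (Fin 2 × Fin 2) ℂ :=
  Matrix.of fun p q => v p * star (v q)

/-- Kronecker (tensor) product of two qubit vectors. -/
def tens (a b : Fin 2 → ℂ) : Fin 2 × Fin 2 → ℂ := fun p => a p.1 * b p.2

/-- Unit (normalized) vector. -/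
def UnitVec {α : Type*} [Fintype α] (v : α → ℂ) : Prop := ∑ i, v i * star (v i) = 1

/-- Hermitian inner product of two-qubit vectors. -/
def inner4 (v w : Fin 2 × Fin 2 → ℂ) : ℂ := ∑ p, star (v p) * w p

/-- A 2×2 density matrix: positive semidefinite with unit trace. -/
def IsDensity2 (A : Matrix (Fin 2) (Fin 2) ℂ) : Prop := A.PosSemidef ∧ A.trace = 1

/-- Separability of a two-qubit density matrix: a finite convex combination of
Kronecker products of 2×2 density matrices. -/
def Separable4 (ρ : Matrix (Fin 2 × Fin 2) (Fin 2 × Fin 2) ℂ) : Prop :=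
  ∃ (n : ℕ) (w : Fin n → ℝ) (A B : Fin n → Matrix (Fin 2) (Fin 2) ℂ),
    (∀ i, 0 ≤ w i) ∧ (∑ i, w i = 1) ∧
    (∀ i, IsDensity2 (A i)) ∧ (∀ i, IsDensity2 (B i)) ∧
    ρ = ∑ i, (w i : ℂ) • (A i ⊗ₖ B i)

/-- Standard basis vector e₀ of ℂ². -/
def e₀ : Fin 2 → ℂ := ![1, 0]

/-- Standard basis vector e₁ of ℂ². -/
def e₁ : Fin 2 → ℂ := ![0, 1]

/-- τ₀-type vector: cos(t/2)e₀ + sin(t/2)e₁. -/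
def tau0 (t : ℝ) : Fin 2 → ℂ := ![(Real.cos (t/2) : ℂ), (Real.sin (t/2) : ℂ)]

/-- τ₁-type vector: sin(t/2)e₀ + cos(t/2)e₁. -/
def tau1 (t : ℝ) : Fin 2 → ℂ := ![(Real.sin (t/2) : ℂ), (Real.cos (t/2) : ℂ)]

/-- Σ'₁ = (1/√2)(e₀ ⊗ τ₀ + e₁ ⊗ τ₁). -/
def sig1' (t : ℝ) : Fin 2 × Fin 2 → ℂ :=
  fun q => ((Real.sqrt 2)⁻¹ : ℂ) * (tens e₀ (tau0 t) q + tens e₁ (tau1 t) q)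

/-- Σ'₂ = (1/√2)(e₀ ⊗ τ₁ + e₁ ⊗ τ₀). -/
def sig2' (t : ℝ) : Fin 2 × Fin 2 → ℂ :=
  fun q => ((Real.sqrt 2)⁻¹ : ℂ) * (tens e₀ (tau1 t) q + tens e₁ (tau0 t) q)

/-- The common reduced state: diagonal entries 1/2, off-diagonal entries (sin θ)/2. -/
def redMat (t : ℝ) : Matrix (Fin 2) (Fin 2) ℂ :=
  !![(1/2 : ℂ), ((Real.sin t / 2 : ℝ) : ℂ); ((Real.sin t / 2 : ℝ) : ℂ), (1/2 : ℂ)]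

/-- κ'(p) = p|Σ'₁⟩⟨Σ'₁| + (1−p)|Σ'₂⟩⟨Σ'₂|. -/
def kappa' (t p : ℝ) : Matrix (Fin 2 × Fin 2) (Fin 2 × Fin 2) ℂ :=
  (p : ℂ) • proj4 (sig1' t) + (1 - (p : ℂ)) • proj4 (sig2' t)


/-- Partial transpose over the second subsystem. -/
def ptX (M : Matrix (Fin 2 × Fin 2) (Fin 2 × Fin 2) ℂ) : Matrix (Fin 2 × Fin 2) (Fin 2 × Fin 2) ℂ :=
  Matrix.of fun p q => M (p.1, q.2) (q.1, p.2)

lemma kron_conjT (A B : Matrix (Fin 2) (Fin 2) ℂ) : (A ⊗ₖ B)ᴴ = Aᴴ ⊗ₖ Bᴴ := by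
  ext ⟨i, j⟩ ⟨k, l⟩
  simp [conjTranspose_apply, kroneckerMap_apply]

lemma psd_kron {A B : Matrix (Fin 2) (Fin 2) ℂ} (hA : A.PosSemidef) (hB : B.PosSemidef) :
    (A ⊗ₖ B).PosSemidef := by
  exact hA.kronecker hB

lemma sep_qform {ρ : Matrix (Fin 2 × Fin 2) (Fin 2 × Fin 2) ℂ} (h : Separable4 ρ)
    (v : Fin 2 × Fin 2 → ℂ) : 0 ≤ star v ⬝ᵥ (ptX ρ) *ᵥ v := by
  obtain ⟨n, w, A, B, hw, -, hA, hB, rfl⟩ := h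
  have hpt : ptX (∑ i, (w i : ℂ) • (A i ⊗ₖ B i)) = ∑ i, (w i : ℂ) • (A i ⊗ₖ (B i)ᵀ) := by
    ext ⟨i, j⟩ ⟨k, l⟩
    simp [ptX, Matrix.sum_apply, kroneckerMap_apply]
  have hs : (∑ i, (w i : ℂ) • (A i ⊗ₖ (B i)ᵀ)) *ᵥ v
      = ∑ i, ((w i : ℂ) • (A i ⊗ₖ (B i)ᵀ)) *ᵥ v := by
    classical
    induction (Finset.univ : Finset (Fin n)) using Finset.induction with
    | empty => simp
    | insert a s h ih => rw [Finset.sum_insert h, Finset.sum_insert h, Matrix.add_mulVec, ih]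
  have hd : star v ⬝ᵥ (∑ i, ((w i : ℂ) • (A i ⊗ₖ (B i)ᵀ)) *ᵥ v)
      = ∑ i, star v ⬝ᵥ (((w i : ℂ) • (A i ⊗ₖ (B i)ᵀ)) *ᵥ v) := by
    simp only [dotProduct, Finset.sum_apply, Finset.mul_sum]
    exact Finset.sum_comm
  rw [hpt, hs, hd]
  apply Finset.sum_nonneg
  intro i _
  rw [smul_mulVec, dotProduct_smul, smul_eq_mul]
  exact mul_nonneg (Complex.zero_le_real.mpr (hw i))
    ((psd_kron (hA i).1 ((hB i).1.transpose)).dotProduct_mulVec_nonneg v)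

def v1 : Fin 2 × Fin 2 → ℂ := fun q => e₀ q.1 * e₀ q.2 - e₁ q.1 * e₁ q.2
def v2 : Fin 2 × Fin 2 → ℂ := fun q => e₀ q.1 * e₁ q.2 - e₁ q.1 * e₀ q.2

lemma hs2C : ((Real.sqrt 2)⁻¹ : ℂ) * ((Real.sqrt 2)⁻¹ : ℂ) = 1/2 := by
  have h : (Real.sqrt 2)⁻¹ * (Real.sqrt 2)⁻¹ = (1/2 : ℝ) := by
    rw [← mul_inv, Real.mul_self_sqrt (by norm_num)]
    norm_num
  rw [← Complex.ofReal_inv, ← Complex.ofReal_mul, h]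
  norm_num

lemma hccC (t : ℝ) : ((Real.cos t : ℝ) : ℂ)
    = (Real.cos (t/2) : ℂ)^2 - (Real.sin (t/2) : ℂ)^2 := by
  have h : Real.cos (t/2)^2 - Real.sin (t/2)^2 = Real.cos t := by
    have h1 := Real.sin_sq_add_cos_sq (t/2)
    have h2 := Real.cos_two_mul (t/2)
    rw [show 2*(t/2)=t by ring] at h2
    linarith
  rw [← h, Complex.ofReal_sub, Complex.ofReal_pow, Complex.ofReal_pow]

lemma qform1 (t p : ℝ) : star v1 ⬝ᵥ (ptX (kappa' t p)) *ᵥ v1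
    = (((2*p-1) * Real.cos t : ℝ) : ℂ) := by
  simp only [dotProduct, mulVec, Fintype.sum_prod_type, Fin.sum_univ_two, ptX, kappa', proj4,
    sig1', sig2', tens, e₀, e₁, tau0, tau1, v1, Matrix.add_apply, Matrix.smul_apply,
    Matrix.of_apply, Pi.star_apply, smul_eq_mul, star_mul', star_sub, star_one, star_zero,
    star_inv₀, Complex.star_def, Complex.conj_ofReal, _root_.map_one, _root_.map_zero,
    Matrix.cons_val_zero, Matrix.cons_val_one, Matrix.head_cons,
    star_add, Complex.ofReal_mul, Complex.ofReal_sub, Complex.ofReal_one, Complex.ofReal_ofNat]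
  linear_combination (2*(2*p-1)*((Real.cos (t/2):ℂ)^2 - (Real.sin (t/2):ℂ)^2)) * hs2C
    - (2*p-1) * hccC t

lemma qform2 (t p : ℝ) : star v2 ⬝ᵥ (ptX (kappa' t p)) *ᵥ v2
    = (((1-2*p) * Real.cos t : ℝ) : ℂ) := by
  simp only [dotProduct, mulVec, Fintype.sum_prod_type, Fin.sum_univ_two, ptX, kappa', proj4,
    sig1', sig2', tens, e₀, e₁, tau0, tau1, v2, Matrix.add_apply, Matrix.smul_apply,
    Matrix.of_apply, Pi.star_apply, smul_eq_mul, star_mul', star_sub, star_one, star_zero,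
    star_inv₀, Complex.star_def, Complex.conj_ofReal, _root_.map_one, _root_.map_zero,
    Matrix.cons_val_zero, Matrix.cons_val_one, Matrix.head_cons,
    star_add, Complex.ofReal_mul, Complex.ofReal_sub, Complex.ofReal_one, Complex.ofReal_ofNat]
  linear_combination (2*(1-2*p)*((Real.cos (t/2):ℂ)^2 - (Real.sin (t/2):ℂ)^2)) * hs2C
    - (1-2*p) * hccC t

/-- the masked mixture κ'(p) of the two non-commuting masked states is
entangled (not separable) for every p ≠ 1/2 and every θ ∈ [0, π/2). -/
theorem masked_mixture_of_noncommuting_states_entangled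
    (θ : ℝ) (hθ : θ ∈ Set.Ico (0 : ℝ) (Real.pi / 2))
    (p : ℝ) (hp : p ∈ Set.Icc (0 : ℝ) 1) (hp' : p ≠ 1/2) :
    ¬ Separable4 (kappa' θ p) := by
  intro hsep
  have hc : 0 < Real.cos θ :=
    Real.cos_pos_of_mem_Ioo ⟨by linarith [Real.pi_pos, hθ.1], hθ.2⟩
  rcases lt_or_gt_of_ne hp' with h | h
  · have h0 := sep_qform hsep v1
    rw [qform1, Complex.zero_le_real] at h0
    have : (2*p-1) * Real.cos θ < 0 := mul_neg_of_neg_of_pos (by linarith) hc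
    linarith
  · have h0 := sep_qform hsep v2
    rw [qform2, Complex.zero_le_real] at h0
    have : (1-2*p) * Real.cos θ < 0 := mul_neg_of_neg_of_pos (by linarith) hc
    linarith

end
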